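/- Let R be a ring, N an R-module, and M₀ ≤ M₁, M₂ ≤ N submodules with M₀ = M₁ ∩ M₂ in the following strong sense: for every pp-formula φ(x̄, ȳ), tuple ā from M₁ and tuple m̄ from M₂ with N ⊨ φ(ā, m̄), there is a tuple l̄ in M₀ with N ⊨ φ(ā, l̄). Then the map t : (M₁ ⊕ M₂)/{(m, −m) : m ∈ M₀} → N given by t([(a, b)]) = a + b is injective. -/
import Mathlib


universe u v

/-- A submodule `A ≤ M` is pure if every finite system of `R`-linear equations with
parameters in `A` that is solvable in `M` is solvable in `A`. -/
def IsPureSubmodule (R : Type u) [Ring R] {M : Type v} [AddCommGroup M] [Module R M]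
    (A : Submodule R M) : Prop :=
  ∀ (k n : ℕ) (c : Fin k → Fin n → R) (a : Fin k → M),
    (∀ i, a i ∈ A) →
    (∃ x : Fin n → M, ∀ i, (∑ j, c i j • x j) = a i) →
    ∃ x : Fin n → M, (∀ j, x j ∈ A) ∧ ∀ i, (∑ j, c i j • x j) = a i

/-- A linear map is a pure embedding if it is injective and its range is a pure submodule. -/
def IsPureEmbedding (R : Type u) [Ring R] {M N : Type v} [AddCommGroup M] [Module R M]
    [AddCommGroup N] [Module R N] (f : M →ₗ[R] N) : Prop :=
  Function.Injective f ∧ IsPureSubmodule R (LinearMap.range f)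

/-- A module is pure-injective if it is a direct summand of every module containing it
as a pure submodule, i.e. every pure embedding out of it admits a retraction. -/
def IsPureInjective (R : Type u) [Ring R] (M : Type v) [AddCommGroup M] [Module R M] : Prop :=
  ∀ (N : Type v) [AddCommGroup N] [Module R N] (f : M →ₗ[R] N),
    IsPureEmbedding R f → ∃ g : N →ₗ[R] M, g ∘ₗ f = LinearMap.id

/-- A module is absolutely pure if it is pure in every module containing it. -/
def IsAbsolutelyPure (R : Type u) [Ring R] (M : Type v) [AddCommGroup M] [Module R M] : Prop :=
  ∀ (N : Type v) [AddCommGroup N] [Module R N] (f : M →ₗ[R] N),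
    Function.Injective f → IsPureSubmodule R (LinearMap.range f)

/-- injectivity of the canonical map out of the pushout, under the
strong intersection hypothesis expressed via pp-formulas. -/
theorem stmt15 (R : Type u) [Ring R] (N : Type u) [AddCommGroup N] [Module R N]
    (M₀ M₁ M₂ : Submodule R N) (h01 : M₀ ≤ M₁) (h02 : M₀ ≤ M₂)
    (H : ∀ (p q r s : ℕ) (a : Fin p → Fin q → R) (b : Fin p → Fin r → R)
        (c : Fin p → Fin s → R) (x : Fin q → N) (m : Fin r → N),
        (∀ j, x j ∈ M₁) → (∀ k, m k ∈ M₂) →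
        (∃ z : Fin s → N, ∀ i,
          (∑ j, a i j • x j) + (∑ kk, b i kk • m kk) + (∑ l, c i l • z l) = 0) →
        ∃ l : Fin r → N, (∀ kk, l kk ∈ M₀) ∧ ∃ z : Fin s → N, ∀ i,
          (∑ j, a i j • x j) + (∑ kk, b i kk • l kk) + (∑ l', c i l' • z l') = 0) :
    ∀ t : ((↥M₁ × ↥M₂) ⧸
        LinearMap.range
          ((Submodule.inclusion h01).prod (-(Submodule.inclusion h02)))) →ₗ[R] N,
      (∀ (x : M₁) (y : M₂),
        t (Submodule.Quotient.mk (x, y)) = (x : N) + (y : N)) →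
      Function.Injective t := by
  intro t ht
  rw [← LinearMap.ker_eq_bot, LinearMap.ker_eq_bot']
  intro q hq
  induction q using Quotient.ind with
  | _ p =>
    obtain ⟨x, y⟩ := p
    have hxy : (x : N) + (y : N) = 0 := by rw [← ht x y]; exact hq
    obtain ⟨l, hl, z, heq⟩ := H 1 1 1 0 (fun _ _ => 1) (fun _ _ => 1) (fun _ i => i.elim0)
      (fun _ => (x : N)) (fun _ => (y : N)) (fun _ => x.2) (fun _ => y.2)
      ⟨fun i => i.elim0, fun i => by simpa using hxy⟩
    have heq1 := heq 0
    simp at heq1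
    -- heq1 : (x:N) + l 0 = 0
    have hlx : l 0 = -(x : N) := eq_neg_of_add_eq_zero_right heq1
    show Submodule.Quotient.mk (x, y) = 0
    rw [Submodule.Quotient.mk_eq_zero]
    refine ⟨⟨-l 0, M₀.neg_mem (hl 0)⟩, ?_⟩
    ext
    · show -(l 0) = (x : N)
      rw [hlx, neg_neg]
    · simp only [LinearMap.prod_apply, Pi.prod, LinearMap.neg_apply]
      show -(-(l 0)) = (y : N)
      rw [neg_neg, hlx]
      exact neg_eq_of_add_eq_zero_right hxy
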